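/- arXiv:1809.03448 — 4 statements merged into one kernel-verified Lean document; each statement's English description precedes it below -/
import Mathlib

section
/- Let g be a C¹ function on ℝ supported in (-ℓ, ℓ). Then for any x with |x| ≤ 2ℓ, the Cauchy principal value satisfies |PV ∫ g(t)/(t-x) dt| ≤ C · ℓ^{1/2} · ‖g'‖_{L²}, with a universal constant C. -/
open MeasureTheory intervalIntegral

/-- Cauchy–Schwarz bound for the integral of a continuous compactly supported
function over an interval. -/
lemma cs_interval_aux {f : ℝ → ℝ} (hf : Continuous f) (hcs : HasCompactSupport f)
    {a b : ℝ} (hab : a ≤ b) :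
    |∫ t in Set.Ioc a b, f t| ≤
      Real.sqrt (b - a) * (∫ t : ℝ, f t ^ 2) ^ ((1 : ℝ) / 2) := by
  set s := Set.Ioc a b with hs
  haveI : IsFiniteMeasure (volume.restrict s) :=
    ⟨by simp [hs, Real.volume_Ioc, Measure.restrict_apply_univ]⟩
  have hmem : MemLp f 2 (volume.restrict s) :=
    (hf.memLp_of_hasCompactSupport (p := 2) hcs).restrict s
  have h2 : ENNReal.ofReal (2 : ℝ) = 2 := by norm_num
  have hconj : Real.HolderConjugate 2 2 := Real.HolderConjugate.two_two
  have hH := integral_mul_le_Lp_mul_Lq_of_nonneg (μ := volume.restrict s)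
      hconj
      (Filter.Eventually.of_forall fun x => abs_nonneg (f x))
      (Filter.Eventually.of_forall fun _ : ℝ => zero_le_one)
      (h2 ▸ hmem.norm) (h2 ▸ memLp_const (1 : ℝ))
  simp only [mul_one] at hH
  have habs : ∀ x : ℝ, |f x| ^ (2:ℝ) = f x ^ 2 := fun x => by
    rw [show ((2:ℝ)) = ((2:ℕ):ℝ) by norm_num, Real.rpow_natCast, sq_abs]
  have hone : ∀ x : ℝ, (1:ℝ) ^ (2:ℝ) = (1:ℝ) := fun _ => Real.one_rpow 2
  -- compute the second factor
  have hvol : ∫ _ : ℝ in s, ((1:ℝ) ^ (2:ℝ)) = b - a := by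
    rw [Real.one_rpow, setIntegral_const, smul_eq_mul, mul_one, hs,
      Real.volume_real_Ioc, max_eq_left (by linarith)]
  -- integrability of f^2
  have hsqcs : HasCompactSupport (fun t => f t ^ 2) := by
    apply HasCompactSupport.intro hcs.isCompact
    intro x hx
    simp [image_eq_zero_of_notMem_tsupport hx]
  have hsqint : Integrable (fun t => f t ^ 2) :=
    (hf.pow 2).integrable_of_hasCompactSupport hsqcs
  have hmono : ∫ t in s, f t ^ 2 ≤ ∫ t : ℝ, f t ^ 2 :=
    setIntegral_le_integral hsqint
      (Filter.Eventually.of_forall fun t => sq_nonneg (f t))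
  calc |∫ t in s, f t| ≤ ∫ t in s, |f t| := by
        rw [← Real.norm_eq_abs]
        exact (norm_integral_le_integral_norm f)
    _ ≤ (∫ t in s, |f t| ^ (2:ℝ)) ^ ((1:ℝ)/2) * (∫ _ : ℝ in s, ((1:ℝ) ^ (2:ℝ))) ^ ((1:ℝ)/2) := hH
    _ = (∫ t in s, f t ^ 2) ^ ((1:ℝ)/2) * Real.sqrt (b - a) := by
        rw [hvol, Real.sqrt_eq_rpow]
        congr 1
        exact congrArg (· ^ ((1:ℝ)/2)) (integral_congr_ae
          (Filter.Eventually.of_forall fun t => habs t))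
    _ ≤ (∫ t : ℝ, f t ^ 2) ^ ((1:ℝ)/2) * Real.sqrt (b - a) := by
        have h0 : (0:ℝ) ≤ ∫ t in s, f t ^ 2 :=
          setIntegral_nonneg measurableSet_Ioc fun t _ => sq_nonneg (f t)
        exact mul_le_mul_of_nonneg_right
          (Real.rpow_le_rpow h0 hmono (by norm_num)) (Real.sqrt_nonneg _)
    _ = Real.sqrt (b - a) * (∫ t : ℝ, f t ^ 2) ^ ((1:ℝ)/2) := mul_comm _ _

/-- Bound on the Cauchy principal value `PV ∫ g(t)/(t-x) dt` for a `C¹`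
function `g` supported in `(-ℓ, ℓ)` and `|x| ≤ 2ℓ`. -/
theorem pv_bound_sqrt_ell_L2 :
    ∃ C > 0, ∀ (ℓ : ℝ), 0 < ℓ → ∀ g : ℝ → ℝ, ContDiff ℝ 1 g →
      (∀ t, t ∉ Set.Ioo (-ℓ) ℓ → g t = 0) →
      ∀ x : ℝ, |x| ≤ 2 * ℓ →
        |∫ u in Set.Ioi (0 : ℝ), (g (x + u) - g (x - u)) / u| ≤
          C * Real.sqrt ℓ * (∫ t : ℝ, (deriv g t) ^ 2) ^ ((1 : ℝ) / 2) := by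
  refine ⟨2 * Real.sqrt 6, by positivity, ?_⟩
  intro ℓ hℓ g hg hsupp x hx
  have hxl : -(2*ℓ) ≤ x := neg_le_of_abs_le hx
  have hxr : x ≤ 2*ℓ := le_of_abs_le hx
  have hgdiff : Differentiable ℝ g := hg.differentiable one_ne_zero
  have hg' : Continuous (deriv g) := hg.continuous_deriv le_rfl
  have hgcs : HasCompactSupport g := by
    apply HasCompactSupport.intro (isCompact_Icc (a := -ℓ) (b := ℓ))
    intro t ht
    exact hsupp t fun h => ht ⟨h.1.le, h.2.le⟩
  have hdcs : HasCompactSupport (deriv g) := hgcs.deriv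
  set M : ℝ := (∫ t : ℝ, (deriv g t) ^ 2) ^ ((1 : ℝ) / 2) with hM
  have hMnn : 0 ≤ M := by
    apply Real.rpow_nonneg
    exact integral_nonneg fun t => sq_nonneg _
  set F : ℝ → ℝ := fun u => (g (x + u) - g (x - u)) / u with hF
  -- the integrand vanishes for u ≥ 3ℓ
  have hvanish : ∀ u : ℝ, 3 * ℓ ≤ u → F u = 0 := by
    intro u hu
    have h1 : g (x + u) = 0 := by
      apply hsupp
      intro h
      rw [Set.mem_Ioo] at h
      linarith [h.2]
    have h2 : g (x - u) = 0 := by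
      apply hsupp
      intro h
      rw [Set.mem_Ioo] at h
      linarith [h.1]
    simp [hF, h1, h2]
  -- reduce the integral to (0, 3ℓ]
  have hred : ∫ u in Set.Ioi (0:ℝ), F u = ∫ u in Set.Ioc 0 (3*ℓ), F u := by
    rw [show ∫ u in Set.Ioi (0:ℝ), F u
        = ∫ u in Set.Ioi (0:ℝ), (Set.Ioc 0 (3*ℓ)).indicator F u from
      setIntegral_congr_fun measurableSet_Ioi (by
        intro u hu
        by_cases h : u ≤ 3*ℓ
        · rw [Set.indicator_of_mem (Set.mem_Ioc.mpr ⟨Set.mem_Ioi.mp hu, h⟩)]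
        · rw [Set.indicator_of_notMem (fun hm => h hm.2), hvanish u (le_of_not_ge h)])]
    rw [setIntegral_indicator measurableSet_Ioc,
      Set.inter_eq_self_of_subset_right Set.Ioc_subset_Ioi_self]
  -- pointwise bound
  have hpt : ∀ u ∈ Set.Ioc (0:ℝ) (3*ℓ), ‖F u‖ ≤ Real.sqrt 2 * M * u ^ (-(1:ℝ)/2) := by
    intro u hu
    have hu0 : 0 < u := hu.1
    have hftc : g (x + u) - g (x - u) = ∫ t in Set.Ioc (x - u) (x + u), deriv g t := by
      rw [← intervalIntegral.integral_of_le (by linarith)]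
      exact (intervalIntegral.integral_deriv_eq_sub
        (fun t _ => (hgdiff t)) ((hg'.intervalIntegrable _ _))).symm
    have hcsb := cs_interval_aux hg' hdcs (a := x - u) (b := x + u) (by linarith)
    rw [← hftc] at hcsb
    have hba : x + u - (x - u) = 2 * u := by ring
    rw [hba] at hcsb
    have hnorm : ‖F u‖ = |g (x + u) - g (x - u)| / u := by
      rw [hF, Real.norm_eq_abs, abs_div, abs_of_pos hu0]
    have key : Real.sqrt (2*u) * M / u = Real.sqrt 2 * M * u ^ (-(1:ℝ)/2) := by
      rw [Real.sqrt_mul (by norm_num : (0:ℝ) ≤ 2) u,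
        show (-(1:ℝ)/2) = -((1:ℝ)/2) by norm_num,
        Real.rpow_neg hu0.le, ← Real.sqrt_eq_rpow, div_eq_iff (ne_of_gt hu0),
        mul_assoc (Real.sqrt 2 * M), inv_mul_eq_div, Real.div_sqrt]
      ring
    rw [hnorm, ← key]
    gcongr
  -- integrable bound
  have hbint : IntegrableOn (fun u : ℝ => Real.sqrt 2 * M * u ^ (-(1:ℝ)/2))
      (Set.Ioc 0 (3*ℓ)) := by
    apply Integrable.const_mul
    have := (intervalIntegral.intervalIntegrable_rpow' (a := 0) (b := 3*ℓ)
      (r := -(1:ℝ)/2) (by norm_num))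
    exact this.1
  have hbound : |∫ u in Set.Ioc 0 (3*ℓ), F u|
      ≤ ∫ u in Set.Ioc 0 (3*ℓ), Real.sqrt 2 * M * u ^ (-(1:ℝ)/2) := by
    rw [← Real.norm_eq_abs]
    apply MeasureTheory.norm_integral_le_of_norm_le hbint
    rw [ae_restrict_iff' measurableSet_Ioc]
    exact Filter.Eventually.of_forall hpt
  -- compute the integral of the bound
  have hcomp : ∫ u in Set.Ioc 0 (3*ℓ), Real.sqrt 2 * M * u ^ (-(1:ℝ)/2)
      = Real.sqrt 2 * M * (2 * Real.sqrt (3*ℓ)) := by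
    rw [MeasureTheory.integral_const_mul]
    congr 1
    rw [← intervalIntegral.integral_of_le (by linarith)]
    rw [integral_rpow (Or.inl (by norm_num : (-1:ℝ) < -(1:ℝ)/2))]
    have h3 : (0:ℝ) ≤ 3*ℓ := by linarith
    rw [show (-(1:ℝ)/2 + 1) = (1:ℝ)/2 by norm_num,
      Real.zero_rpow (by norm_num), ← Real.sqrt_eq_rpow]
    ring
  have hfinal : Real.sqrt 2 * M * (2 * Real.sqrt (3*ℓ))
      = 2 * Real.sqrt 6 * Real.sqrt ℓ * M := by
    rw [Real.sqrt_mul (by norm_num : (0:ℝ) ≤ 3) ℓ,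
      show (6:ℝ) = 2 * 3 by norm_num,
      Real.sqrt_mul (by norm_num : (0:ℝ) ≤ 2) 3]
    ring
  calc |∫ u in Set.Ioi (0:ℝ), F u| = |∫ u in Set.Ioc 0 (3*ℓ), F u| := by rw [hred]
    _ ≤ Real.sqrt 2 * M * (2 * Real.sqrt (3*ℓ)) := hbound.trans_eq hcomp
    _ = 2 * Real.sqrt 6 * Real.sqrt ℓ * M := hfinal
end

section
/- Let g be a C¹ compactly supported function on ℝ and C a locally finite point configuration on ℝ. Then |∫ g(x)(dC(x) - dx)| ≤ K · Σ_{i ∈ ℤ} |g|_{1,V_i} · D̃_i, where K is a universal constant, |g|_{1,V_i} := sup_{y ∈ [i-3,i+3]} |g'(y)|, and D̃_i := |Discr_{[0,i]}| + |Discr_{[i,i+1]}| + 1. -/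
open MeasureTheory

lemma ico_succ' (a b : ℤ) (h : a ≤ b) : Finset.Ico a (b+1) = insert b (Finset.Ico a b) := by
  ext x; simp [Finset.mem_Ico]; omega

lemma sum_succ_top' (f : ℤ → ℝ) (a b : ℤ) (h : a ≤ b) :
    ∑ i ∈ Finset.Ico a (b+1), f i = (∑ i ∈ Finset.Ico a b, f i) + f b := by
  rw [ico_succ' a b h, Finset.sum_insert (by simp)]; ring

lemma abel_sum' (f h : ℤ → ℝ) (a : ℤ) : ∀ b : ℤ, a ≤ b →
    ∑ i ∈ Finset.Ico a b, f i * (h (i+1) - h i)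
      = f b * h b - f a * h a - ∑ i ∈ Finset.Ico a b, (f (i+1) - f i) * h (i+1) := by
  refine Int.le_induction ?_ ?_
  · simp
  · intro b hb ih
    rw [sum_succ_top' _ _ _ hb, sum_succ_top' _ _ _ hb, ih]
    ring

lemma ioc_union_lemma (a b : ℤ) :
    Set.Ioc (a:ℝ) (b:ℝ) = ⋃ i ∈ Finset.Ico a b, Set.Ioc (i:ℝ) ((i:ℝ)+1) := by
  ext x
  simp only [Set.mem_Ioc, Set.mem_iUnion, Finset.mem_Ico, exists_prop]
  constructor
  · rintro ⟨h1, h2⟩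
    refine ⟨⌈x⌉ - 1, ⟨?_, ?_⟩, ?_, ?_⟩
    · have : (a:ℝ) < ⌈x⌉ := lt_of_lt_of_le h1 (Int.le_ceil x)
      have := Int.cast_lt.mp this
      omega
    · have : ⌈x⌉ ≤ b := Int.ceil_le.mpr h2
      omega
    · push_cast
      have := Int.ceil_lt_add_one x
      linarith
    · push_cast
      have := Int.le_ceil x
      linarith
  · rintro ⟨i, ⟨hi1, hi2⟩, hx1, hx2⟩
    constructor
    · calc (a:ℝ) ≤ (i:ℝ) := by exact_mod_cast hi1
        _ < x := hx1
    · calc x ≤ (i:ℝ) + 1 := hx2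
        _ ≤ (b:ℝ) := by exact_mod_cast hi2

lemma pairwise_disjoint_ioc (s : Finset ℤ) :
    (↑s : Set ℤ).Pairwise (Function.onFun Disjoint (fun i : ℤ => Set.Ioc (i:ℝ) ((i:ℝ)+1))) := by
  intro i _ j _ hij
  refine Set.Ioc_disjoint_Ioc.mpr ?_
  rcases hij.lt_or_gt with h | h
  · have : (i:ℝ) + 1 ≤ (j:ℝ) := by exact_mod_cast h
    exact le_trans (min_le_left _ _) (le_trans this (le_max_right _ _))
  · have : (j:ℝ) + 1 ≤ (i:ℝ) := by exact_mod_cast h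
    exact le_trans (min_le_right _ _) (le_trans this (le_max_left _ _))

lemma biSup_nonneg' (f : ℝ → ℝ) (s : Set ℝ) : 0 ≤ ⨆ y ∈ s, |f y| :=
  Real.iSup_nonneg fun _ => Real.iSup_nonneg fun _ => abs_nonneg _

lemma deriv_le_biSup (g : ℝ → ℝ) (hg : ContDiff ℝ 1 g) (a b : ℝ)
    {z : ℝ} (hz : z ∈ Set.Icc a b) :
    |deriv g z| ≤ ⨆ y ∈ Set.Icc a b, |deriv g y| := by
  have hc : ContinuousOn (fun y => |deriv g y|) (Set.Icc a b) :=
    ((hg.continuous_deriv le_rfl).abs).continuousOn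
  obtain ⟨Cb, hCb⟩ := (isCompact_Icc (a := a) (b := b)).exists_bound_of_continuousOn hc
  have hbdd : BddAbove (Set.range fun y => ⨆ _ : y ∈ Set.Icc a b, |deriv g y|) := by
    refine ⟨max Cb 0, ?_⟩
    rintro t ⟨y, rfl⟩
    by_cases hy : y ∈ Set.Icc a b
    · haveI : Nonempty (y ∈ Set.Icc a b) := ⟨hy⟩
      simp only [ciSup_const]
      exact le_max_of_le_left (le_trans (le_abs_self _) ((Real.norm_eq_abs _ ▸ hCb y hy)))
    · haveI : IsEmpty (y ∈ Set.Icc a b) := ⟨fun h => hy h⟩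
      simp only [Real.iSup_of_isEmpty]
      exact le_max_right _ _
  haveI : Nonempty (z ∈ Set.Icc a b) := ⟨hz⟩
  calc |deriv g z| = ⨆ _ : z ∈ Set.Icc a b, |deriv g z| := ciSup_const.symm
    _ ≤ ⨆ y, ⨆ _ : y ∈ Set.Icc a b, |deriv g y| := le_ciSup hbdd z

lemma biSup_eq_zero' (g : ℝ → ℝ) (a b : ℝ) (h : ∀ y ∈ Set.Icc a b, deriv g y = 0) :
    (⨆ y ∈ Set.Icc a b, |deriv g y|) = 0 := by
  refine le_antisymm ?_ (biSup_nonneg' _ _)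
  refine Real.iSup_le (fun y => ?_) le_rfl
  refine Real.iSup_le (fun hy => ?_) le_rfl
  rw [h y hy]; simp

lemma lip_bound (g : ℝ → ℝ) (hg : ContDiff ℝ 1 g) (a b : ℝ)
    {x y : ℝ} (hx : x ∈ Set.Icc a b) (hy : y ∈ Set.Icc a b) :
    |g y - g x| ≤ (⨆ z ∈ Set.Icc a b, |deriv g z|) * |y - x| := by
  have := Convex.norm_image_sub_le_of_norm_deriv_le (f := g) (s := Set.Icc a b)
    (fun z _ => hg.differentiable one_ne_zero z)
    (fun z hz => by rw [Real.norm_eq_abs]; exact deriv_le_biSup g hg a b hz)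
    (convex_Icc a b) hx hy
  simpa [Real.norm_eq_abs] using this

noncomputable def Sdisc (C : Measure ℝ) (j : ℤ) : ℝ :=
  if 0 ≤ j then (C (Set.Ioc (0:ℝ) (j:ℝ))).toReal - j else -(C (Set.Ioc ((j:ℝ)) 0)).toReal - j

lemma abs_Sdisc (C : Measure ℝ) (j : ℤ) :
    |Sdisc C j| = abs ((C (Set.uIoc (0 : ℝ) (j : ℝ))).toReal - |(j : ℝ)|) := by
  unfold Sdisc
  rcases le_or_gt 0 j with h | h
  · have h' : (0:ℝ) ≤ (j:ℝ) := by exact_mod_cast h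
    rw [if_pos h, Set.uIoc_of_le h', abs_of_nonneg h']
  · have h' : (j:ℝ) < 0 := by exact_mod_cast h
    rw [if_neg (not_le.mpr h), Set.uIoc_comm, Set.uIoc_of_le h'.le, abs_of_neg h']
    rw [show -(C (Set.Ioc ((j:ℝ)) 0)).toReal - (j:ℝ)
        = -((C (Set.Ioc ((j:ℝ)) 0)).toReal - -(j:ℝ)) by ring, abs_neg]

lemma Sdisc_succ (C : Measure ℝ) (hfin : ∀ a b : ℝ, C (Set.Ioc a b) ≠ ⊤) (i : ℤ) :
    Sdisc C (i+1) - Sdisc C i = (C (Set.Ioc (i:ℝ) ((i:ℝ)+1))).toReal - 1 := by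
  have hsplit : ∀ a b c : ℝ, a ≤ b → b ≤ c →
      (C (Set.Ioc a c)).toReal = (C (Set.Ioc a b)).toReal + (C (Set.Ioc b c)).toReal := by
    intro a b c hab hbc
    rw [← Set.Ioc_union_Ioc_eq_Ioc hab hbc, measure_union _ measurableSet_Ioc,
      ENNReal.toReal_add (hfin a b) (hfin b c)]
    exact Set.Ioc_disjoint_Ioc.mpr (le_trans (min_le_left _ _) (le_max_right _ _))
  unfold Sdisc
  rcases le_or_gt 0 i with h | h
  · rw [if_pos (by omega : (0:ℤ) ≤ i + 1), if_pos h]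
    have h' : (0:ℝ) ≤ (i:ℝ) := by exact_mod_cast h
    rw [show ((i+1 : ℤ):ℝ) = (i:ℝ) + 1 by push_cast; ring]
    rw [hsplit 0 i ((i:ℝ)+1) h' (by linarith)]
    push_cast
    ring
  · rcases eq_or_lt_of_le (by omega : i + 1 ≤ 0) with h1 | h1
    · have hi : i = -1 := by omega
      subst hi
      rw [if_pos (by omega : (0:ℤ) ≤ (-1:ℤ) + 1), if_neg (by omega)]
      norm_num
      ring
    · rw [if_neg (by omega : ¬ (0:ℤ) ≤ i + 1), if_neg (not_le.mpr h)]
      have h2 : (i:ℝ) ≤ (i:ℝ) + 1 := by linarith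
      have h3 : ((i:ℝ) + 1) ≤ 0 := by
        have : ((i+1:ℤ):ℝ) ≤ 0 := by exact_mod_cast h1.le
        push_cast at this; linarith
      rw [show ((i+1 : ℤ):ℝ) = (i:ℝ) + 1 by push_cast; ring]
      rw [hsplit (i:ℝ) ((i:ℝ)+1) 0 h2 h3]
      push_cast
      ring

/-- A priori bound on fluctuations of linear statistics, in terms of discrepancies.
A point configuration on `ℝ` is encoded as a measure `C` which is integer-valued
and finite on compact intervals (a locally finite point configuration, with
multiplicities).  `Discr_{[a,b]}` is `C([a,b]) - |b-a|`. -/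
theorem apriori_bound_fluctuations :
    ∃ K > 0, ∀ C : Measure ℝ,
      (∀ a b : ℝ, a ≤ b → ∃ n : ℕ, C (Set.Icc a b) = (n : ENNReal)) →
      ∀ g : ℝ → ℝ, ContDiff ℝ 1 g → HasCompactSupport g →
        |(∫ x, g x ∂C) - ∫ x, g x| ≤
          K * ∑' i : ℤ,
            (⨆ y ∈ Set.Icc ((i : ℝ) - 3) ((i : ℝ) + 3), |deriv g y|) *
            (abs ((C (Set.uIoc (0 : ℝ) (i : ℝ))).toReal - |(i : ℝ)|) +
              |(C (Set.Ioc (i : ℝ) ((i : ℝ) + 1))).toReal - 1| + 1) := by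
  refine ⟨3, by norm_num, ?_⟩
  intro C hC g hg hsupp
  set term : ℤ → ℝ := fun i =>
    (⨆ y ∈ Set.Icc ((i : ℝ) - 3) ((i : ℝ) + 3), |deriv g y|) *
    (abs ((C (Set.uIoc (0 : ℝ) (i : ℝ))).toReal - |(i : ℝ)|) +
      |(C (Set.Ioc (i : ℝ) ((i : ℝ) + 1))).toReal - 1| + 1) with hterm
  set M : ℤ → ℝ := fun i => ⨆ y ∈ Set.Icc ((i : ℝ) - 3) ((i : ℝ) + 3), |deriv g y| with hMdef
  set Δ : ℤ → ℝ := fun i => (C (Set.Ioc (i : ℝ) ((i : ℝ) + 1))).toReal - 1 with hDdef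
  set A : ℤ → ℝ := fun i => abs ((C (Set.uIoc (0 : ℝ) (i : ℝ))).toReal - |(i : ℝ)|) with hAdef
  have hterm_eq : ∀ i, term i = M i * (A i + |Δ i| + 1) := fun i => rfl
  -- finiteness of C
  have hIccfin : ∀ a b : ℝ, C (Set.Icc a b) ≠ ⊤ := by
    intro a b
    rcases le_or_gt a b with h | h
    · obtain ⟨n, hn⟩ := hC a b h
      rw [hn]; exact ENNReal.natCast_ne_top n
    · rw [Set.Icc_eq_empty (not_le.mpr h), measure_empty]; exact ENNReal.zero_ne_top
  have hIoc : ∀ a b : ℝ, C (Set.Ioc a b) ≠ ⊤ := fun a b =>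
    ne_top_of_le_ne_top (hIccfin a b) (measure_mono Set.Ioc_subset_Icc_self)
  haveI hcfin : IsFiniteMeasureOnCompacts C := by
    constructor
    intro K hK
    obtain ⟨rr, hrr⟩ := hK.isBounded.subset_closedBall 0
    have hsub : K ⊆ Set.Icc (0 - rr) (0 + rr) := by rwa [← Real.closedBall_eq_Icc]
    exact lt_of_le_of_lt (measure_mono hsub) (lt_top_iff_ne_top.mpr (hIccfin _ _))
  have hgc : Continuous g := hg.continuous
  have hgiC : Integrable g C := hgc.integrable_of_hasCompactSupport hsupp
  have hgiL : Integrable g (volume : Measure ℝ) := hgc.integrable_of_hasCompactSupport hsupp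
  -- support radius
  obtain ⟨r0, hr0⟩ := hsupp.isBounded.subset_closedBall 0
  set r : ℝ := max r0 0 with hrdef
  have hg0 : ∀ x : ℝ, r < |x| → g x = 0 := by
    intro x hx
    apply image_eq_zero_of_notMem_tsupport
    intro hmem
    have h1 := hr0 hmem
    rw [Metric.mem_closedBall, Real.dist_eq, sub_zero] at h1
    have := h1.trans (le_max_left r0 0)
    linarith
  have hd0 : ∀ x : ℝ, r < |x| → deriv g x = 0 := by
    intro x hx
    by_contra hne
    have hmem : x ∈ tsupport g := support_deriv_subset (by simpa using hne)
    have h1 := hr0 hmem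
    rw [Metric.mem_closedBall, Real.dist_eq, sub_zero] at h1
    have := h1.trans (le_max_left r0 0)
    linarith
  have hr_nonneg : 0 ≤ r := le_max_right _ _
  set N : ℤ := ⌈r⌉ + 2 with hNdef
  have hrN : r + 2 ≤ (N:ℝ) := by
    have h := Int.le_ceil r
    rw [hNdef]
    push_cast
    linarith
  have hab : -N ≤ N := by
    have : (0:ℤ) ≤ ⌈r⌉ := Int.ceil_nonneg hr_nonneg
    omega
  -- nonnegativity facts
  have hMnn : ∀ i, 0 ≤ M i := fun i => biSup_nonneg' _ _
  have htnn : ∀ i, 0 ≤ term i := by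
    intro i
    rw [hterm_eq]
    have : (0:ℝ) ≤ A i + |Δ i| + 1 := by positivity
    exact mul_nonneg (hMnn i) this
  -- term vanishes outside a finite set
  have hMzero : ∀ i : ℤ, i ∉ Finset.Icc (-N-4) (N+4) → M i = 0 := by
    intro i hi
    rw [Finset.mem_Icc] at hi
    apply biSup_eq_zero'
    intro y hy
    apply hd0
    rcases (not_and_or.mp hi) with h | h
    · have h' : (i:ℝ) ≤ -(N:ℝ) - 5 := by
        have h5 : i ≤ -N - 5 := by omega
        exact_mod_cast h5
      have hy2 : y ≤ -(N:ℝ) - 2 := le_trans hy.2 (by linarith)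
      have : r + 4 ≤ -y := by linarith
      have : r < -y := by linarith
      calc r < -y := this
        _ ≤ |y| := neg_le_abs y
    · have h' : (N:ℝ) + 5 ≤ (i:ℝ) := by
        have h5 : N + 5 ≤ i := by omega
        exact_mod_cast h5
      have hy2 : (N:ℝ) + 2 ≤ y := le_trans (by linarith) hy.1
      have : r < y := by linarith
      exact lt_of_lt_of_le this (le_abs_self y)
  have htz : ∀ i ∉ Finset.Icc (-N-4) (N+4), term i = 0 := by
    intro i hi
    rw [hterm_eq, hMzero i hi, zero_mul]
  have hsummable : Summable term := summable_of_ne_finset_zero htz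
  -- decomposition of integrals
  have hcompl : ∀ x : ℝ, x ∉ Set.Ioc ((-N:ℤ):ℝ) ((N:ℤ):ℝ) → g x = 0 := by
    intro x hx
    rw [Set.mem_Ioc, not_and_or] at hx
    apply hg0
    rcases hx with h | h
    · push_neg at h
      have : x ≤ -(N:ℝ) := by push_cast at h ⊢; linarith
      have h2 : r + 2 ≤ -x := by linarith
      calc r < -x := by linarith
        _ ≤ |x| := neg_le_abs x
    · push_neg at h
      have : (N:ℝ) < x := by push_cast at h ⊢; linarith
      calc r < x := by linarith
        _ ≤ |x| := le_abs_self x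
  have hdecomp : ∀ μ : Measure ℝ, Integrable g μ →
      ∫ x, g x ∂μ = ∑ i ∈ Finset.Ico (-N) N, ∫ x in Set.Ioc (i:ℝ) ((i:ℝ)+1), g x ∂μ := by
    intro μ hgi
    rw [← setIntegral_eq_integral_of_forall_compl_eq_zero hcompl (μ := μ),
      ioc_union_lemma (-N) N,
      integral_biUnion_finset _ (fun i _ => measurableSet_Ioc)
        (pairwise_disjoint_ioc _) (fun i _ => hgi.integrableOn)]
  set T : ℤ → ℝ := fun i =>
    (∫ x in Set.Ioc (i:ℝ) ((i:ℝ)+1), g x ∂C) - ∫ x in Set.Ioc (i:ℝ) ((i:ℝ)+1), g x with hTdef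
  have hLHS : (∫ x, g x ∂C) - ∫ x, g x = ∑ i ∈ Finset.Ico (-N) N, T i := by
    rw [hdecomp C hgiC, hdecomp volume hgiL, ← Finset.sum_sub_distrib]
  -- pointwise bound on remainder
  have hsubI : ∀ i : ℤ, Set.Ioc (i:ℝ) ((i:ℝ)+1) ⊆ Set.Icc ((i:ℝ)-3) ((i:ℝ)+3) := by
    intro i x hx
    exact ⟨by linarith [hx.1], by linarith [hx.2]⟩
  have hmemI : ∀ i : ℤ, (i:ℝ) ∈ Set.Icc ((i:ℝ)-3) ((i:ℝ)+3) := by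
    intro i; constructor <;> simp <;> linarith
  have hbd : ∀ i : ℤ, ∀ x ∈ Set.Ioc (i:ℝ) ((i:ℝ)+1), ‖g x - g (i:ℝ)‖ ≤ M i := by
    intro i x hx
    have h1 := lip_bound g hg ((i:ℝ)-3) ((i:ℝ)+3) (hmemI i) (hsubI i hx)
    have h2 : |x - (i:ℝ)| ≤ 1 := by
      rw [abs_of_pos (by linarith [hx.1])]
      linarith [hx.2]
    rw [Real.norm_eq_abs]
    calc |g x - g (i:ℝ)| ≤ M i * |x - (i:ℝ)| := h1
      _ ≤ M i * 1 := mul_le_mul_of_nonneg_left h2 (hMnn i)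
      _ = M i := mul_one _
  have hRi : ∀ i : ℤ, |T i - g i * (Sdisc C (i+1) - Sdisc C i)| ≤ M i * (|Δ i| + 2) := by
    intro i
    rw [Sdisc_succ C hIoc i]
    have hCf : C (Set.Ioc (i:ℝ) ((i:ℝ)+1)) ≠ ⊤ := hIoc _ _
    have hvol1 : (volume (Set.Ioc (i:ℝ) ((i:ℝ)+1))).toReal = 1 := by
      rw [Real.volume_Ioc]
      norm_num
    have hvolfin : volume (Set.Ioc (i:ℝ) ((i:ℝ)+1)) < ⊤ := by
      rw [Real.volume_Ioc]
      exact ENNReal.ofReal_lt_top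
    have e1 : ∫ x in Set.Ioc (i:ℝ) ((i:ℝ)+1), (g x - g i) ∂C
        = (∫ x in Set.Ioc (i:ℝ) ((i:ℝ)+1), g x ∂C)
          - (C (Set.Ioc (i:ℝ) ((i:ℝ)+1))).toReal * g i := by
      rw [integral_sub hgiC.integrableOn (integrableOn_const hCf),
        setIntegral_const, smul_eq_mul, measureReal_def]
    have e2 : ∫ x in Set.Ioc (i:ℝ) ((i:ℝ)+1), (g x - g i)
        = (∫ x in Set.Ioc (i:ℝ) ((i:ℝ)+1), g x) - g i := by
      rw [integral_sub hgiL.integrableOn (integrableOn_const hvolfin.ne),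
        setIntegral_const, smul_eq_mul, measureReal_def, hvol1, one_mul]
    have key : T i - g i * ((C (Set.Ioc (i:ℝ) ((i:ℝ)+1))).toReal - 1)
        = (∫ x in Set.Ioc (i:ℝ) ((i:ℝ)+1), (g x - g i) ∂C)
          - ∫ x in Set.Ioc (i:ℝ) ((i:ℝ)+1), (g x - g i) := by
      rw [e1, e2, hTdef]
      ring
    rw [key]
    have n1 : ‖∫ x in Set.Ioc (i:ℝ) ((i:ℝ)+1), (g x - g i) ∂C‖
        ≤ M i * (C (Set.Ioc (i:ℝ) ((i:ℝ)+1))).toReal :=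
      norm_setIntegral_le_of_norm_le_const hCf.lt_top (hbd i)
    have n2 : ‖∫ x in Set.Ioc (i:ℝ) ((i:ℝ)+1), (g x - g i)‖ ≤ M i * 1 := by
      have := norm_setIntegral_le_of_norm_le_const (μ := volume) hvolfin (hbd i)
      rwa [measureReal_def, hvol1] at this
    have hCle : (C (Set.Ioc (i:ℝ) ((i:ℝ)+1))).toReal ≤ |Δ i| + 1 := by
      have : (C (Set.Ioc (i:ℝ) ((i:ℝ)+1))).toReal - 1 ≤ |Δ i| := le_abs_self _
      linarith
    have habs := abs_sub (∫ x in Set.Ioc (i:ℝ) ((i:ℝ)+1), (g x - g i) ∂C)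
      (∫ x in Set.Ioc (i:ℝ) ((i:ℝ)+1), (g x - g i))
    rw [Real.norm_eq_abs] at n1 n2
    have hMC : M i * (C (Set.Ioc (i:ℝ) ((i:ℝ)+1))).toReal ≤ M i * (|Δ i| + 1) :=
      mul_le_mul_of_nonneg_left hCle (hMnn i)
    calc |(∫ x in Set.Ioc (i:ℝ) ((i:ℝ)+1), (g x - g i) ∂C)
          - ∫ x in Set.Ioc (i:ℝ) ((i:ℝ)+1), (g x - g i)|
        ≤ |∫ x in Set.Ioc (i:ℝ) ((i:ℝ)+1), (g x - g i) ∂C|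
          + |∫ x in Set.Ioc (i:ℝ) ((i:ℝ)+1), (g x - g i)| := abs_sub _ _
      _ ≤ M i * (|Δ i| + 1) + M i * 1 := add_le_add (le_trans n1 hMC) n2
      _ = M i * (|Δ i| + 2) := by ring
  -- Abel summation part
  have hgN : g ((N:ℤ):ℝ) = 0 := by
    apply hg0
    rw [abs_of_nonneg (by push_cast; linarith)]
    push_cast
    linarith
  have hgNn : g ((-N:ℤ):ℝ) = 0 := by
    apply hg0
    push_cast
    rw [abs_neg, abs_of_nonneg (by linarith)]
    linarith
  have habel : ∑ i ∈ Finset.Ico (-N) N, g (i:ℝ) * (Sdisc C (i+1) - Sdisc C i)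
      = g ((N:ℤ):ℝ) * Sdisc C N - g ((-N:ℤ):ℝ) * Sdisc C (-N)
        - ∑ i ∈ Finset.Ico (-N) N, (g ((i+1:ℤ):ℝ) - g (i:ℝ)) * Sdisc C (i+1) :=
    abel_sum' (fun i : ℤ => g (i:ℝ)) (Sdisc C) (-N) N hab
  -- difference bound
  have hdiff : ∀ i : ℤ, |g ((i+1:ℤ):ℝ) - g (i:ℝ)| ≤ M (i+1) := by
    intro i
    have hx : (i:ℝ) ∈ Set.Icc (((i+1:ℤ):ℝ)-3) (((i+1:ℤ):ℝ)+3) := by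
      constructor <;> (push_cast; linarith)
    have hy : ((i+1:ℤ):ℝ) ∈ Set.Icc (((i+1:ℤ):ℝ)-3) (((i+1:ℤ):ℝ)+3) := by
      constructor <;> (push_cast; linarith)
    have h1 := lip_bound g hg (((i+1:ℤ):ℝ)-3) (((i+1:ℤ):ℝ)+3) hx hy
    have h2 : |((i+1:ℤ):ℝ) - (i:ℝ)| = 1 := by
      push_cast
      rw [show (i:ℝ) + 1 - (i:ℝ) = 1 by ring, abs_one]
    rw [h2, mul_one] at h1
    exact h1
  -- assembling
  have hsplitT : ∀ i : ℤ, T i = g (i:ℝ) * (Sdisc C (i+1) - Sdisc C i)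
      + (T i - g (i:ℝ) * (Sdisc C (i+1) - Sdisc C i)) := by
    intro i; ring
  have step1 : |(∫ x, g x ∂C) - ∫ x, g x|
      ≤ |∑ i ∈ Finset.Ico (-N) N, g (i:ℝ) * (Sdisc C (i+1) - Sdisc C i)|
        + ∑ i ∈ Finset.Ico (-N) N, |T i - g (i:ℝ) * (Sdisc C (i+1) - Sdisc C i)| := by
    rw [hLHS]
    calc |∑ i ∈ Finset.Ico (-N) N, T i|
        = |(∑ i ∈ Finset.Ico (-N) N, g (i:ℝ) * (Sdisc C (i+1) - Sdisc C i))
          + ∑ i ∈ Finset.Ico (-N) N, (T i - g (i:ℝ) * (Sdisc C (i+1) - Sdisc C i))| := by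
          rw [← Finset.sum_add_distrib]
          congr 1
          exact Finset.sum_congr rfl fun i _ => hsplitT i
      _ ≤ _ := le_trans (abs_add_le _ _) (by
          gcongr
          exact Finset.abs_sum_le_sum_abs _ _)
  have step2 : |∑ i ∈ Finset.Ico (-N) N, g (i:ℝ) * (Sdisc C (i+1) - Sdisc C i)|
      ≤ ∑ i ∈ Finset.Ico (-N) N, M (i+1) * |Sdisc C (i+1)| := by
    rw [habel, hgN, hgNn, zero_mul, zero_mul, sub_zero, zero_sub, abs_neg]
    calc |∑ i ∈ Finset.Ico (-N) N, (g ((i+1:ℤ):ℝ) - g (i:ℝ)) * Sdisc C (i+1)|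
        ≤ ∑ i ∈ Finset.Ico (-N) N, |(g ((i+1:ℤ):ℝ) - g (i:ℝ)) * Sdisc C (i+1)| :=
          Finset.abs_sum_le_sum_abs _ _
      _ ≤ ∑ i ∈ Finset.Ico (-N) N, M (i+1) * |Sdisc C (i+1)| := by
          apply Finset.sum_le_sum
          intro i _
          rw [abs_mul]
          exact mul_le_mul_of_nonneg_right (hdiff i) (abs_nonneg _)
  -- bound each piece by the tsum
  have hterm_ge_A : ∀ j : ℤ, M j * |Sdisc C j| ≤ term j := by
    intro j
    rw [hterm_eq, abs_Sdisc]
    have : abs ((C (Set.uIoc (0 : ℝ) (j : ℝ))).toReal - |(j:ℝ)|) ≤ A j + |Δ j| + 1 := by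
      have h1 : (0:ℝ) ≤ |Δ j| := abs_nonneg _
      have h2 : abs ((C (Set.uIoc (0 : ℝ) (j : ℝ))).toReal - |(j:ℝ)|) = A j := rfl
      linarith
    exact mul_le_mul_of_nonneg_left this (hMnn j)
  have hterm_ge_R : ∀ j : ℤ, M j * (|Δ j| + 2) ≤ 2 * term j := by
    intro j
    rw [hterm_eq]
    have hA : 0 ≤ A j := abs_nonneg _
    nlinarith [hMnn j, abs_nonneg (Δ j)]
  have step3 : ∑ i ∈ Finset.Ico (-N) N, M (i+1) * |Sdisc C (i+1)| ≤ ∑' i, term i := by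
    calc ∑ i ∈ Finset.Ico (-N) N, M (i+1) * |Sdisc C (i+1)|
        ≤ ∑ i ∈ Finset.Ico (-N) N, term (i+1) :=
          Finset.sum_le_sum fun i _ => hterm_ge_A (i+1)
      _ = ∑ j ∈ (Finset.Ico (-N) N).image (· + 1), term j := by
          rw [Finset.sum_image (fun a _ b _ h => by omega)]
      _ ≤ ∑' i, term i := hsummable.sum_le_tsum _ (fun i _ => htnn i)
  have step4 : ∑ i ∈ Finset.Ico (-N) N, |T i - g (i:ℝ) * (Sdisc C (i+1) - Sdisc C i)|
      ≤ 2 * ∑' i, term i := by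
    calc ∑ i ∈ Finset.Ico (-N) N, |T i - g (i:ℝ) * (Sdisc C (i+1) - Sdisc C i)|
        ≤ ∑ i ∈ Finset.Ico (-N) N, 2 * term i := by
          apply Finset.sum_le_sum
          intro i _
          exact le_trans (hRi i) (hterm_ge_R i)
      _ = 2 * ∑ i ∈ Finset.Ico (-N) N, term i := by rw [Finset.mul_sum]
      _ ≤ 2 * ∑' i, term i := by
          have := hsummable.sum_le_tsum (Finset.Ico (-N) N) (fun i _ => htnn i)
          linarith
  have htsum_nn : 0 ≤ ∑' i, term i := tsum_nonneg htnn
  calc |(∫ x, g x ∂C) - ∫ x, g x|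
      ≤ |∑ i ∈ Finset.Ico (-N) N, g (i:ℝ) * (Sdisc C (i+1) - Sdisc C i)|
        + ∑ i ∈ Finset.Ico (-N) N, |T i - g (i:ℝ) * (Sdisc C (i+1) - Sdisc C i)| := step1
    _ ≤ (∑' i, term i) + 2 * ∑' i, term i := add_le_add (le_trans step2 step3) step4
    _ = 3 * ∑' i, term i := by ring
end

section
/- For every t ∈ (-λ, λ), the principal value integral PV ∫_{-λ}^{λ} 1/(√(λ²-x²)·(t-x)) dx equals 0. -/
open MeasureTheory Filter


noncomputable def PVG (lam t y : ℝ) : ℝ :=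
  (Real.log (Real.sqrt (lam^2 - t^2) * Real.sqrt (lam^2 - y^2) + lam^2 - t*y)
    - Real.log (t - y)) / Real.sqrt (lam^2 - t^2)

lemma PVNpos (lam t x : ℝ) (hlam : 0 < lam) (ht1 : -lam < t) (ht2 : t < lam)
    (hx1 : -lam ≤ x) (hx2 : x ≤ lam) :
    0 < Real.sqrt (lam^2 - t^2) * Real.sqrt (lam^2 - x^2) + lam^2 - t*x := by
  have h1 : |t| < lam := abs_lt.2 ⟨ht1, ht2⟩
  have h2 : |x| ≤ lam := abs_le.2 ⟨hx1, hx2⟩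
  have h5 : t*x ≤ |t| * |x| := (le_abs_self (t*x)).trans_eq (abs_mul t x)
  have h3 : |t| * |x| ≤ |t| * lam := mul_le_mul_of_nonneg_left h2 (abs_nonneg t)
  have h4 : |t| * lam < lam * lam := mul_lt_mul_of_pos_right h1 hlam
  nlinarith [mul_nonneg (Real.sqrt_nonneg (lam^2 - t^2)) (Real.sqrt_nonneg (lam^2 - x^2))]

lemma PVderiv (lam t x : ℝ) (hlam : 0 < lam) (ht1 : -lam < t) (ht2 : t < lam)
    (hx1 : -lam < x) (hx2 : x < lam) (hxt : x ≠ t) :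
    HasDerivAt (PVG lam t) (1 / (Real.sqrt (lam^2 - x^2) * (t - x))) x := by
  have hs2 : Real.sqrt (lam^2 - t^2)^2 = lam^2 - t^2 := Real.sq_sqrt (by nlinarith)
  have hs : 0 < Real.sqrt (lam^2 - t^2) := Real.sqrt_pos.2 (by nlinarith)
  have hr2 : Real.sqrt (lam^2 - x^2)^2 = lam^2 - x^2 := Real.sq_sqrt (by nlinarith)
  have hr : 0 < Real.sqrt (lam^2 - x^2) := Real.sqrt_pos.2 (by nlinarith)
  set s := Real.sqrt (lam^2 - t^2) with hsdef
  set r := Real.sqrt (lam^2 - x^2) with hrdef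
  have hN : 0 < s * r + lam^2 - t*x := PVNpos lam t x hlam ht1 ht2 hx1.le hx2.le
  have htx : t - x ≠ 0 := sub_ne_zero.2 (Ne.symm hxt)
  have hd1 : HasDerivAt (fun y : ℝ => lam^2 - y^2) (-(2*x)) x := by
    simpa using (HasDerivAt.const_sub (lam^2) (hasDerivAt_pow 2 x))
  have hd2 : HasDerivAt (fun y => Real.sqrt (lam^2 - y^2)) (1/(2*r) * (-(2*x))) x :=
    (Real.hasDerivAt_sqrt (by nlinarith)).comp x hd1
  have hNd : HasDerivAt (fun y => s * Real.sqrt (lam^2 - y^2) + lam^2 - t*y)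
      (s * (1/(2*r) * (-(2*x))) - t*1) x :=
    ((hd2.const_mul s).add_const (lam^2)).sub ((hasDerivAt_id x).const_mul t)
  have hlogN := (Real.hasDerivAt_log (ne_of_gt hN)).comp x hNd
  have hd3 : HasDerivAt (fun y : ℝ => t - y) (-1) x := by
    simpa using (HasDerivAt.const_sub t (hasDerivAt_id x))
  have hlogT := (Real.hasDerivAt_log htx).comp x hd3
  have hG := (hlogN.sub hlogT).div_const s
  convert hG using 1
  case e'_4 => rfl
  case e'_5 => rfl
  case e'_8 => rfl
  have hNe : s * r + lam^2 - t*x ≠ 0 := ne_of_gt hN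
  have key : (-(s*x) - t*r)*(t-x) + r*(s*r+lam^2-t*x) = s*(s*r+lam^2-t*x) := by
    linear_combination s*hr2 - r*hs2
  rw [eq_div_iff (ne_of_gt hs), div_mul_eq_mul_div, one_mul,
    div_eq_iff (mul_ne_zero (ne_of_gt hr) htx)]
  field_simp
  linear_combination -key

lemma PVpiece (lam t a b : ℝ) (hlam : 0 < lam) (ht1 : -lam < t) (ht2 : t < lam)
    (hab : a ≤ b) (ha : -lam ≤ a) (hb : b ≤ lam) (hne : t ∉ Set.Icc a b) :
    IntervalIntegrable (fun x => 1 / (Real.sqrt (lam^2 - x^2) * (t - x))) volume a b ∧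
    ∫ x in a..b, 1 / (Real.sqrt (lam^2 - x^2) * (t - x)) = PVG lam t b - PVG lam t a := by
  have hs : 0 < Real.sqrt (lam^2 - t^2) := Real.sqrt_pos.2 (by nlinarith)
  have hcont : ContinuousOn (PVG lam t) (Set.Icc a b) := by
    apply ContinuousOn.div_const
    apply ContinuousOn.sub
    · apply ContinuousOn.log
      · fun_prop
      · intro x hx
        exact ne_of_gt (PVNpos lam t x hlam ht1 ht2 (ha.trans hx.1) (hx.2.trans hb))
    · apply ContinuousOn.log
      · fun_prop
      · intro x hx
        exact sub_ne_zero.2 (fun h => hne (h ▸ hx))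
  have hderiv : ∀ x ∈ Set.Ioo a b, HasDerivAt (PVG lam t)
      (1 / (Real.sqrt (lam^2 - x^2) * (t - x))) x := fun x hx =>
    PVderiv lam t x hlam ht1 ht2 (lt_of_le_of_lt ha hx.1) (lt_of_lt_of_le hx.2 hb)
      (fun h => hne (h ▸ Set.mem_Icc_of_Ioo hx))
  have hint : IntervalIntegrable (fun x => 1 / (Real.sqrt (lam^2 - x^2) * (t - x))) volume a b := by
    rcases lt_or_ge t a with h | h
    · have hpos : ∀ x ∈ Set.Ioo (min a b) (max a b),
          0 ≤ -(1 / (Real.sqrt (lam^2 - x^2) * (t - x))) := by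
        intro x hx
        rw [min_eq_left hab, max_eq_right hab] at hx
        rw [neg_nonneg]
        apply div_nonpos_of_nonneg_of_nonpos zero_le_one
        exact mul_nonpos_of_nonneg_of_nonpos (Real.sqrt_nonneg _) (by linarith [hx.1])
      have hd : ∀ x ∈ Set.Ioo (min a b) (max a b),
          HasDerivAt (fun y => -(PVG lam t y)) (-(1 / (Real.sqrt (lam^2 - x^2) * (t - x)))) x := by
        intro x hx
        rw [min_eq_left hab, max_eq_right hab] at hx
        exact (hderiv x hx).neg
      have := intervalIntegral.intervalIntegrable_deriv_of_nonneg
        (by rw [Set.uIcc_of_le hab]; exact hcont.neg) hd hpos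
      have h3 : (fun x => 1 / (Real.sqrt (lam^2 - x^2) * (t - x)))
          = fun x => -(-(1 / (Real.sqrt (lam^2 - x^2) * (t - x)))) := by
        funext x; ring
      rw [h3]
      exact this.neg
    · have hbt : b < t := by
        rcases lt_or_ge b t with h2 | h2
        · exact h2
        · exact absurd ⟨h, h2⟩ hne
      have hpos : ∀ x ∈ Set.Ioo (min a b) (max a b),
          0 ≤ 1 / (Real.sqrt (lam^2 - x^2) * (t - x)) := by
        intro x hx
        rw [min_eq_left hab, max_eq_right hab] at hx
        exact one_div_nonneg.mpr
          (mul_nonneg (Real.sqrt_nonneg _) (by linarith [hx.2]))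
      have hd : ∀ x ∈ Set.Ioo (min a b) (max a b),
          HasDerivAt (PVG lam t) (1 / (Real.sqrt (lam^2 - x^2) * (t - x))) x := by
        intro x hx
        rw [min_eq_left hab, max_eq_right hab] at hx
        exact hderiv x hx
      exact intervalIntegral.intervalIntegrable_deriv_of_nonneg
        (by rw [Set.uIcc_of_le hab]; exact hcont) hd hpos
  exact ⟨hint, intervalIntegral.integral_eq_sub_of_hasDerivAt_of_le hab hcont hderiv hint⟩


/-- For `t ∈ (-λ, λ)`, the principal value of `∫_{-λ}^{λ} dx / (√(λ²-x²)(t-x))`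
vanishes. -/
theorem pv_arcsine_kernel_zero (lam t : ℝ) (hlam : 0 < lam)
    (ht : t ∈ Set.Ioo (-lam) lam) :
    Tendsto
      (fun ε : ℝ =>
        ∫ x in Set.Ioo (-lam) lam \ Set.Ioo (t - ε) (t + ε),
          1 / (Real.sqrt (lam ^ 2 - x ^ 2) * (t - x)))
      (nhdsWithin 0 (Set.Ioi 0)) (nhds 0) := by
  obtain ⟨ht1, ht2⟩ := ht
  have hs : 0 < Real.sqrt (lam^2 - t^2) := Real.sqrt_pos.2 (by nlinarith)
  set s := Real.sqrt (lam^2 - t^2) with hsdef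
  set Nf : ℝ → ℝ := fun y => s * Real.sqrt (lam^2 - y^2) + lam^2 - t*y with hNfdef
  have hNt : 0 < Nf t := PVNpos lam t t hlam ht1 ht2 ht1.le ht2.le
  have hNfc : Continuous Nf := by
    rw [hNfdef]; fun_prop
  have hlim : Tendsto (fun ε : ℝ => (Real.log (Nf (t-ε)) - Real.log (Nf (t+ε)))/s)
      (nhds 0) (nhds 0) := by
    have h1 : Tendsto (fun ε : ℝ => t - ε) (nhds (0:ℝ)) (nhds t) := by
      have := (continuous_sub_left t).tendsto (0:ℝ)
      simpa using this
    have h2 : Tendsto (fun ε : ℝ => t + ε) (nhds (0:ℝ)) (nhds t) := by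
      have := (continuous_add_left t).tendsto (0:ℝ)
      simpa using this
    have hlog : ContinuousAt Real.log (Nf t) := Real.continuousAt_log (ne_of_gt hNt)
    have l1 := hlog.tendsto.comp ((hNfc.tendsto t).comp h1)
    have l2 := hlog.tendsto.comp ((hNfc.tendsto t).comp h2)
    have := (l1.sub l2).div_const s
    simpa using this
  refine Tendsto.congr' ?_ (hlim.mono_left nhdsWithin_le_nhds)
  have hδ : 0 < min (t + lam) (lam - t) := lt_min (by linarith) (by linarith)
  filter_upwards [Ioo_mem_nhdsGT hδ] with ε hε
  obtain ⟨hε0, hεδ⟩ := hε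
  have hε1 : -lam < t - ε := by
    have := lt_of_lt_of_le hεδ (min_le_left _ _); linarith
  have hε2 : t + ε < lam := by
    have := lt_of_lt_of_le hεδ (min_le_right _ _); linarith
  have hset : Set.Ioo (-lam) lam \ Set.Ioo (t-ε) (t+ε)
      = Set.Ioc (-lam) (t-ε) ∪ Set.Ico (t+ε) lam := by
    ext x
    simp only [Set.mem_diff, Set.mem_Ioo, Set.mem_union, Set.mem_Ioc, Set.mem_Ico,
      not_and, not_lt]
    constructor
    · rintro ⟨⟨h1, h2⟩, h3⟩
      rcases le_or_gt x (t - ε) with h | h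
      · exact Or.inl ⟨h1, h⟩
      · exact Or.inr ⟨h3 h, h2⟩
    · rintro (⟨h1, h2⟩ | ⟨h1, h2⟩)
      · exact ⟨⟨h1, by linarith⟩, fun h => by linarith⟩
      · exact ⟨⟨by linarith, h2⟩, fun h => by linarith⟩
  have p1 := PVpiece lam t (-lam) (t-ε) hlam ht1 ht2 (by linarith) le_rfl (by linarith)
    (by simp only [Set.mem_Icc, not_and, not_le]; intro _; linarith)
  have p2 := PVpiece lam t (t+ε) lam hlam ht1 ht2 (by linarith) (by linarith) le_rfl
    (by simp only [Set.mem_Icc, not_and, not_le]; intro h; linarith)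
  have i1 : IntegrableOn (fun x => 1 / (Real.sqrt (lam^2 - x^2) * (t - x)))
      (Set.Ioc (-lam) (t-ε)) volume :=
    (intervalIntegrable_iff_integrableOn_Ioc_of_le (by linarith)).1 p1.1
  have i2 : IntegrableOn (fun x => 1 / (Real.sqrt (lam^2 - x^2) * (t - x)))
      (Set.Ioc (t+ε) lam) volume :=
    (intervalIntegrable_iff_integrableOn_Ioc_of_le (by linarith)).1 p2.1
  have i2' : IntegrableOn (fun x => 1 / (Real.sqrt (lam^2 - x^2) * (t - x)))
      (Set.Ico (t+ε) lam) volume := i2.congr_set_ae MeasureTheory.Ico_ae_eq_Ioc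
  have hdisj : Disjoint (Set.Ioc (-lam) (t-ε)) (Set.Ico (t+ε) lam) := by
    rw [Set.disjoint_left]
    rintro x ⟨_, h1⟩ ⟨h2, _⟩
    linarith
  have hpow : ∀ x : ℝ, lam ^ 2 - x ^ 2 = lam^2 - x^2 := fun _ => rfl
  rw [hset, MeasureTheory.setIntegral_union hdisj measurableSet_Ico i1 i2',
    MeasureTheory.setIntegral_congr_set MeasureTheory.Ico_ae_eq_Ioc,
    ← intervalIntegral.integral_of_le (show -lam ≤ t - ε by linarith),
    ← intervalIntegral.integral_of_le (show t + ε ≤ lam by linarith),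
    p1.2, p2.2]
  have e1 : PVG lam t (-lam) = Real.log lam / s := by
    unfold PVG
    rw [show lam^2 - (-lam)^2 = 0 by ring, Real.sqrt_zero,
      show Real.sqrt (lam^2 - t^2) * 0 + lam^2 - t*(-lam) = lam * (lam + t) by ring,
      show t - (-lam) = lam + t by ring,
      Real.log_mul (ne_of_gt hlam) (by linarith)]
    ring
  have e2 : PVG lam t lam = Real.log lam / s := by
    unfold PVG
    rw [show lam^2 - lam^2 = 0 by ring, Real.sqrt_zero,
      show Real.sqrt (lam^2 - t^2) * 0 + lam^2 - t*lam = lam * (lam - t) by ring,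
      show t - lam = -(lam - t) by ring, Real.log_neg_eq_log,
      Real.log_mul (ne_of_gt hlam) (by linarith)]
    ring
  have e3 : PVG lam t (t-ε) = (Real.log (Nf (t-ε)) - Real.log ε)/s := by
    unfold PVG
    rw [show t - (t-ε) = ε by ring]
  have e4 : PVG lam t (t+ε) = (Real.log (Nf (t+ε)) - Real.log ε)/s := by
    unfold PVG
    rw [show t - (t+ε) = -ε by ring, Real.log_neg_eq_log]
  rw [e1, e2, e3, e4]
  ring
end

section
/- Let Φ: [-λ,λ] → [-λ,λ] be an increasing C¹ bijection pushing Lebesgue measure forward to μ(x)dx, let η be a finite point configuration in Λ = (-λ,λ) and η_Φ its image under Φ. Then ∬_{(Λ×Λ)∖diag} -log|x-y| (dη_Φ(x)-μ(x)dx)(dη_Φ(y)-μ(y)dy) = ∬_{(Λ×Λ)∖diag} -log|x-y| (dη(x)-dx)(dη(y)-dy) + ∬_{Λ×Λ} -log|1+Δ(x,y)| (dη-dx)(dη-dy) + ∫ log Φ'(x) dη(x), where Δ(x,y) := (Φ(y)-y-Φ(x)+x)/(y-x) (extended by Φ'-1 on the diagonal), assuming all the integrals are finite. -/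
open MeasureTheory intervalIntegral

open Filter Set

section helpers

lemma intervalInt_eq_Icc {lam : ℝ} (hlam : 0 < lam) (g : ℝ → ℝ) :
    (∫ x in (-lam)..lam, g x) = ∫ x, g x ∂(volume.restrict (Set.Icc (-lam) lam)) := by
  rw [intervalIntegral.integral_of_le (by linarith), ← Measure.restrict_congr_set Ioc_ae_eq_Icc]

lemma intervalIntble_Icc {lam : ℝ} (hlam : 0 < lam) {g : ℝ → ℝ}
    (h : IntervalIntegrable g volume (-lam) lam) :
    Integrable g (volume.restrict (Set.Icc (-lam) lam)) := by
  rw [← Measure.restrict_congr_set Ioc_ae_eq_Icc]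
  exact (intervalIntegrable_iff_integrableOn_Ioc_of_le (by linarith)).mp h

lemma map_measure_eq {lam : ℝ} (hlam : 0 < lam) {μ Φ : ℝ → ℝ}
    (hμcont : ContinuousOn μ (Set.Icc (-lam) lam))
    (hμnn : ∀ x ∈ Set.Icc (-lam) lam, 0 ≤ μ x)
    (hΦcont : ContinuousOn Φ (Set.Icc (-lam) lam))
    (hpush : ∀ f : ℝ → ℝ, Continuous f →
      (∫ x in (-lam)..lam, f (Φ x)) = ∫ x in (-lam)..lam, f x * μ x) :
    Measure.map Φ (volume.restrict (Set.Icc (-lam) lam)) =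
      (volume.restrict (Set.Icc (-lam) lam)).withDensity
        (fun x => ENNReal.ofReal (μ x)) := by
  set I := Set.Icc (-lam) lam with hI
  set ν0 := volume.restrict I with hν0
  have hIm : MeasurableSet I := measurableSet_Icc
  have hΦae : AEMeasurable Φ ν0 := hΦcont.aemeasurable hIm
  have hμint : Integrable μ ν0 := hμcont.integrableOn_Icc
  have hμae0 : ∀ᵐ x ∂ν0, 0 ≤ μ x := by
    filter_upwards [ae_restrict_mem hIm] with x hx using hμnn x hx
  haveI hfin0 : IsFiniteMeasure ν0 := by
    constructor
    rw [hν0, Measure.restrict_apply_univ, hI, Real.volume_Icc]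
    exact ENNReal.ofReal_lt_top
  haveI : IsFiniteMeasure (Measure.map Φ ν0) := by
    constructor
    rw [Measure.map_apply_of_aemeasurable hΦae MeasurableSet.univ, Set.preimage_univ]
    exact measure_lt_top _ _
  haveI : IsFiniteMeasure (ν0.withDensity (fun x => ENNReal.ofReal (μ x))) := by
    constructor
    rw [withDensity_apply _ MeasurableSet.univ, Measure.restrict_univ]
    calc ∫⁻ x, ENNReal.ofReal (μ x) ∂ν0 ≤ ∫⁻ x, ‖μ x‖₊ ∂ν0 := by
          refine lintegral_mono fun x => ?_
          calc ENNReal.ofReal (μ x) ≤ ENNReal.ofReal |μ x| :=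
                ENNReal.ofReal_le_ofReal (le_abs_self _)
            _ = ‖μ x‖₊ := (Real.enorm_eq_ofReal_abs _).symm
      _ < ⊤ := hμint.2
  refine Measure.ext_of_Iic _ _ fun a => ?_
  -- approximating sequence
  set fseq : ℕ → ℝ → ℝ := fun n y => max 0 (min 1 (1 - n * (y - a))) with hfseq
  have hcont : ∀ n, Continuous (fseq n) := by
    intro n
    exact continuous_const.max (continuous_const.min (by continuity))
  have hbd : ∀ n y, ‖fseq n y‖ ≤ 1 := by
    intro n y
    rw [Real.norm_eq_abs, abs_le]
    refine ⟨by linarith [le_max_left (0:ℝ) (min 1 (1 - n * (y - a)))],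
      max_le zero_le_one (min_le_left _ _)⟩
  have hlim : ∀ y, Tendsto (fun n => fseq n y) atTop
      (nhds (Set.indicator (Set.Iic a) (fun _ => (1:ℝ)) y)) := by
    intro y
    rcases le_or_gt y a with h | h
    · have : ∀ n : ℕ, fseq n y = 1 := by
        intro n
        have h1 : (n:ℝ) * (y - a) ≤ 0 :=
          mul_nonpos_of_nonneg_of_nonpos (Nat.cast_nonneg n) (by linarith)
        show (0:ℝ) ⊔ (1 ⊓ (1 - n * (y - a))) = 1
        rw [min_eq_left (by linarith), max_eq_right (by linarith)]
      simp only [this, Set.indicator_of_mem (Set.mem_Iic.mpr h)]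
      exact tendsto_const_nhds
    · rw [Set.indicator_of_notMem (by simpa using h)]
      obtain ⟨N, hN⟩ := exists_nat_ge (1 / (y - a))
      apply tendsto_atTop_of_eventually_const (i₀ := N)
      intro n hn
      have hya : 0 < y - a := by linarith
      have : 1 ≤ (n:ℝ) * (y - a) := by
        have h2 : (1 / (y - a)) * (y - a) ≤ (n:ℝ) * (y - a) := by
          apply mul_le_mul_of_nonneg_right _ hya.le
          exact hN.trans (Nat.cast_le.mpr hn)
        rwa [one_div_mul_cancel hya.ne'] at h2
      show (0:ℝ) ⊔ (1 ⊓ (1 - n * (y - a))) = 0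
      rw [min_eq_right (by linarith), max_eq_left (by linarith)]
  -- limits on both sides
  have hint_eq : ∀ n, ∫ y, fseq n y ∂(Measure.map Φ ν0) = ∫ y, fseq n y * μ y ∂ν0 := by
    intro n
    rw [integral_map hΦae (hcont n).aestronglyMeasurable]
    rw [← intervalInt_eq_Icc hlam, hpush _ (hcont n), intervalInt_eq_Icc hlam]
  have lim1 : Tendsto (fun n => ∫ y, fseq n y ∂(Measure.map Φ ν0)) atTop
      (nhds (∫ y, Set.indicator (Set.Iic a) (fun _ => (1:ℝ)) y ∂(Measure.map Φ ν0))) := by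
    refine tendsto_integral_of_dominated_convergence (fun _ => 1)
      (fun n => (hcont n).aestronglyMeasurable) (integrable_const 1)
      (fun n => Eventually.of_forall fun y => hbd n y)
      (Eventually.of_forall fun y => hlim y)
  have lim2 : Tendsto (fun n => ∫ y, fseq n y * μ y ∂ν0) atTop
      (nhds (∫ y, Set.indicator (Set.Iic a) (fun _ => (1:ℝ)) y * μ y ∂ν0)) := by
    refine tendsto_integral_of_dominated_convergence (fun y => ‖μ y‖)
      (fun n => ((hcont n).aestronglyMeasurable.mono_measure Measure.restrict_le_self).mul hμint.1)
      hμint.norm (fun n => Eventually.of_forall fun y => ?_)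
      (Eventually.of_forall fun y => ?_)
    · rw [norm_mul]
      calc ‖fseq n y‖ * ‖μ y‖ ≤ 1 * ‖μ y‖ :=
            mul_le_mul_of_nonneg_right (hbd n y) (norm_nonneg _)
        _ = ‖μ y‖ := one_mul _
    · exact (hlim y).mul_const _
  have heq : (∫ y, Set.indicator (Set.Iic a) (fun _ => (1:ℝ)) y ∂(Measure.map Φ ν0))
      = ∫ y, Set.indicator (Set.Iic a) (fun _ => (1:ℝ)) y * μ y ∂ν0 := by
    refine tendsto_nhds_unique ?_ lim2
    simpa only [hint_eq] using lim1
  -- evaluate both sides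
  have hval1 : (∫ y, Set.indicator (Set.Iic a) (fun _ => (1:ℝ)) y ∂(Measure.map Φ ν0))
      = ((Measure.map Φ ν0) (Set.Iic a)).toReal := by
    rw [MeasureTheory.integral_indicator measurableSet_Iic, setIntegral_const, smul_eq_mul, mul_one, measureReal_def]
  have hval2 : (∫ y, Set.indicator (Set.Iic a) (fun _ => (1:ℝ)) y * μ y ∂ν0)
      = ∫ y in Set.Iic a, μ y ∂ν0 := by
    rw [← MeasureTheory.integral_indicator measurableSet_Iic]
    congr 1
    funext y
    by_cases hy : y ∈ Set.Iic a
    · simp [hy]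
    · simp [hy]
  have hval3 : (ν0.withDensity (fun x => ENNReal.ofReal (μ x))) (Set.Iic a)
      = ENNReal.ofReal (∫ y in Set.Iic a, μ y ∂ν0) := by
    rw [withDensity_apply _ measurableSet_Iic]
    rw [← ofReal_integral_eq_lintegral_ofReal (hμint.restrict) (ae_restrict_of_ae hμae0)]
  have hnn : 0 ≤ ∫ y in Set.Iic a, μ y ∂ν0 :=
    integral_nonneg_of_ae (ae_restrict_of_ae hμae0)
  have hkey : ((Measure.map Φ ν0) (Set.Iic a)).toReal = ∫ y in Set.Iic a, μ y ∂ν0 := by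
    rw [← hval1, heq, hval2]
  rw [hval3, ← hkey, ENNReal.ofReal_toReal (measure_ne_top _ _)]

end helpers

/-- The interaction energy of `(dη - ρ dx)` against itself on `(Λ×Λ) ∖ diag`,
for a finite point configuration `η` in `Λ = (-λ,λ)` and a density `ρ`,
written in expanded form (removing the diagonal only affects the atomic part). -/
noncomputable def pairEnergy (lam : ℝ) (η : Finset ℝ) (ρ : ℝ → ℝ) : ℝ :=
  (∑ p ∈ η, ∑ q ∈ η, if p = q then 0 else -Real.log |p - q|)
    - 2 * ∑ p ∈ η, ∫ y in (-lam)..lam, (-Real.log |p - y|) * ρ y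
    + ∫ x in (-lam)..lam, ∫ y in (-lam)..lam, (-Real.log |x - y|) * (ρ x * ρ y)

/-- `-log|1 + Δ(x,y)|` where `Δ(x,y) = (ψ(y)-ψ(x))/(y-x)`, `ψ = Φ - id`,
extended by `Φ' - 1` on the diagonal. -/
noncomputable def slopeLog (Φ : ℝ → ℝ) (x y : ℝ) : ℝ :=
  -Real.log |1 + (if x = y then deriv Φ x - 1
      else ((Φ y - y) - (Φ x - x)) / (y - x))|

/-- `∬_{Λ×Λ} -log|1+Δ(x,y)| (dη-dx)(dη-dy)` in expanded form. -/
noncomputable def crossTerm (lam : ℝ) (Φ : ℝ → ℝ) (η : Finset ℝ) : ℝ :=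
  (∑ p ∈ η, ∑ q ∈ η, slopeLog Φ p q)
    - 2 * ∑ p ∈ η, ∫ y in (-lam)..lam, slopeLog Φ p y
    + ∫ x in (-lam)..lam, ∫ y in (-lam)..lam, slopeLog Φ x y

/-- Energy expansion along the transport `Φ`:
the interaction energy of `η_Φ` against `μ(x)dx` equals that of `η` against
`dx`, plus the `-log|1+Δ|` term, plus the Jacobian term `∫ log Φ' dη`. -/
theorem energy_expansion_along_transport (lam : ℝ) (hlam : 0 < lam)
    (μ : ℝ → ℝ) (hμcont : ContinuousOn μ (Set.Icc (-lam) lam))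
    (hμpos : ∀ x ∈ Set.Icc (-lam) lam, 0 < μ x)
    (hmass : (∫ x in (-lam)..lam, μ x) = 2 * lam)
    (Φ : ℝ → ℝ)
    (hC1 : ContDiffOn ℝ 1 Φ (Set.Icc (-lam) lam))
    (hmono : StrictMonoOn Φ (Set.Icc (-lam) lam))
    (hbij : Set.BijOn Φ (Set.Icc (-lam) lam) (Set.Icc (-lam) lam))
    (hpush : ∀ f : ℝ → ℝ, Continuous f →
      (∫ x in (-lam)..lam, f (Φ x)) = ∫ x in (-lam)..lam, f x * μ x)
    (η : Finset ℝ) (hη : (η : Set ℝ) ⊆ Set.Ioo (-lam) lam)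
    (hlog : IntegrableOn (fun z : ℝ × ℝ => Real.log |z.1 - z.2|)
      (Set.Icc (-lam) lam ×ˢ Set.Icc (-lam) lam))
    (hlogp : ∀ p : ℝ, IntervalIntegrable (fun y => Real.log |p - y|)
      volume (-lam) lam) :
    pairEnergy lam (η.image Φ) μ =
      pairEnergy lam η (fun _ => 1) + crossTerm lam Φ η +
        ∑ p ∈ η, Real.log (deriv Φ p) := by
    classical
  have hle : (-lam) ≤ lam := by linarith
  set I := Set.Icc (-lam) lam with hIdef
  set ν0 := volume.restrict I with hν0def
  have hIm : MeasurableSet I := measurableSet_Icc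
  have hsub : (η : Set ℝ) ⊆ I := fun x hx => Set.Ioo_subset_Icc_self (hη hx)
  have hΦcont : ContinuousOn Φ I := hC1.continuousOn
  have hΦae : AEMeasurable Φ ν0 := hΦcont.aemeasurable hIm
  have hmap : Measure.map Φ ν0 = ν0.withDensity (fun x => ENNReal.ofReal (μ x)) :=
    map_measure_eq hlam hμcont (fun x hx => (hμpos x hx).le) hΦcont hpush
  have hμsm : AEStronglyMeasurable μ ν0 := hμcont.aestronglyMeasurable hIm
  have hμae : AEMeasurable μ ν0 := hμsm.aemeasurable
  have hμnn : ∀ᵐ x ∂ν0, 0 ≤ μ x := by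
    filter_upwards [ae_restrict_mem hIm] with x hx using (hμpos x hx).le
  obtain ⟨M, hM⟩ := IsCompact.exists_bound_of_continuousOn isCompact_Icc hμcont
  have hμbd : ∀ᵐ x ∂ν0, ‖μ x‖ ≤ M := by
    filter_upwards [ae_restrict_mem hIm] with x hx using hM x hx
  have hμint : Integrable μ ν0 := hμcont.integrableOn_Icc
  have htonn : AEMeasurable (fun x => (μ x).toNNReal) ν0 :=
    measurable_real_toNNReal.comp_aemeasurable hμae
  -- transfer lemmas
  have key : ∀ g : ℝ → ℝ, AEStronglyMeasurable g (Measure.map Φ ν0) →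
      (∫ x, g (Φ x) ∂ν0) = ∫ y, g y * μ y ∂ν0 := by
    intro g hg
    rw [← integral_map hΦae hg, hmap]
    rw [show (fun x => ENNReal.ofReal (μ x)) = (fun x => ((μ x).toNNReal : ENNReal)) from rfl]
    rw [integral_withDensity_eq_integral_smul₀ htonn g]
    refine integral_congr_ae ?_
    filter_upwards [hμnn] with x hx
    rw [NNReal.smul_def, smul_eq_mul, Real.coe_toNNReal _ hx, mul_comm]
  have keyint : ∀ g : ℝ → ℝ, AEStronglyMeasurable g (Measure.map Φ ν0) →
      Integrable (fun y => g y * μ y) ν0 → Integrable (fun x => g (Φ x)) ν0 := by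
    intro g hg hgi
    have h1 : Integrable g (Measure.map Φ ν0) := by
      rw [hmap, show (fun x => ENNReal.ofReal (μ x)) = (fun x => ((μ x).toNNReal : ENNReal)) from rfl,
        integrable_withDensity_iff_integrable_smul₀ htonn]
      refine hgi.congr ?_
      filter_upwards [hμnn] with x hx
      rw [NNReal.smul_def, smul_eq_mul, Real.coe_toNNReal _ hx, mul_comm]
    exact (integrable_map_measure hg hΦae).mp h1
  -- measurability / integrability of logs
  have mLog : ∀ a : ℝ, Measurable (fun y : ℝ => Real.log |a - y|) := fun a =>
    Real.measurable_log.comp ((continuous_const.sub continuous_id).abs.measurable)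
  have iLog : ∀ a : ℝ, Integrable (fun y => Real.log |a - y|) ν0 := fun a =>
    intervalIntble_Icc hlam (hlogp a)
  have iLogNeg : ∀ a : ℝ, Integrable (fun y => -Real.log |a - y|) ν0 := fun a =>
    (iLog a).neg.congr (Filter.Eventually.of_forall fun y => rfl)
  have hne : ∀ p : ℝ, ∀ᵐ x ∂ν0, x ≠ p := by
    intro p
    rw [ae_iff]
    simp only [ne_eq, not_not]
    have h2 : {x : ℝ | x = p} = {p} := by ext; simp
    rw [h2, hν0def, Measure.restrict_apply (measurableSet_singleton p)]
    exact measure_mono_null Set.inter_subset_left (measure_singleton p)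
  have hΦinj : Set.InjOn Φ I := hmono.injOn
  -- pointwise splitting of the log
  have hsplit : ∀ x ∈ I, ∀ y ∈ I, x ≠ y →
      -Real.log |Φ x - Φ y| = -Real.log |x - y| + slopeLog Φ x y := by
    intro x hx y hy hxy
    have hyx : y - x ≠ 0 := sub_ne_zero.mpr (Ne.symm hxy)
    have hΦxy : Φ y - Φ x ≠ 0 :=
      sub_ne_zero.mpr fun h => hxy ((hΦinj hy hx h).symm)
    simp only [slopeLog, if_neg hxy]
    have h1 : 1 + ((Φ y - y) - (Φ x - x)) / (y - x) = (Φ y - Φ x) / (y - x) := by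
      field_simp
      ring
    rw [h1, abs_div, Real.log_div (abs_ne_zero.mpr hΦxy) (abs_ne_zero.mpr hyx),
      abs_sub_comm (Φ x) (Φ y), abs_sub_comm x y]
    ring
  have hdiag : ∀ p : ℝ, slopeLog Φ p p = -Real.log (deriv Φ p) := by
    intro p
    simp only [slopeLog, if_true, ite_true, if_pos]
    rw [show 1 + (deriv Φ p - 1) = deriv Φ p by ring, Real.log_abs]
  -- integrability of slopeLog sections
  have iComp : ∀ a : ℝ, Integrable (fun x => Real.log |Φ a - Φ x|) ν0 := by
    intro a
    refine keyint (fun y => Real.log |Φ a - y|) ((mLog (Φ a)).aestronglyMeasurable) ?_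
    exact ((iLog (Φ a)).bdd_mul hμsm hμbd).congr
      (Eventually.of_forall fun x => mul_comm _ _)
  have iSlope : ∀ a ∈ I, Integrable (fun x => slopeLog Φ a x) ν0 := by
    intro a ha
    refine ((iComp a).neg.add (iLog a)).congr ?_
    filter_upwards [ae_restrict_mem hIm, hne a] with x hx hxa
    have h3 := hsplit a ha x hx (fun h => hxa h.symm)
    simp only [Pi.add_apply, Pi.neg_apply]
    linarith [h3]
  have innerEq : ∀ a : ℝ, (∫ y, (-Real.log |a - y|) * μ y ∂ν0)
      = ∫ x, -Real.log |a - Φ x| ∂ν0 := fun a =>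
    (key (fun y => -Real.log |a - y|) ((mLog a).neg.aestronglyMeasurable)).symm
  have innerSplit : ∀ a ∈ I, (∫ x, -Real.log |Φ a - Φ x| ∂ν0)
      = (∫ x, -Real.log |a - x| ∂ν0) + ∫ x, slopeLog Φ a x ∂ν0 := by
    intro a ha
    rw [← integral_add (iLogNeg a) (iSlope a ha)]
    refine integral_congr_ae ?_
    filter_upwards [ae_restrict_mem hIm, hne a] with x hx hxa
    exact hsplit a ha x hx (fun h => hxa h.symm)
  have hBp : ∀ p ∈ I, (∫ y, (-Real.log |Φ p - y|) * μ y ∂ν0)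
      = (∫ x, -Real.log |p - x| ∂ν0) + ∫ x, slopeLog Φ p x ∂ν0 := fun p hp =>
    (innerEq (Φ p)).trans (innerSplit p hp)
  -- atom-atom sums
  have hinj' : ∀ x ∈ η, ∀ y ∈ η, Φ x = Φ y → x = y := fun a ha b hb h =>
    hΦinj (hsub (Finset.mem_coe.mpr ha)) (hsub (Finset.mem_coe.mpr hb)) h
  have hA : (∑ p ∈ η.image Φ, ∑ q ∈ η.image Φ, if p = q then 0 else -Real.log |p - q|)
      = (∑ p ∈ η, ∑ q ∈ η, if p = q then 0 else -Real.log |p - q|)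
        + (∑ p ∈ η, ∑ q ∈ η, slopeLog Φ p q)
        + ∑ p ∈ η, Real.log (deriv Φ p) := by
    rw [Finset.sum_image hinj']
    have step1 : ∀ p ∈ η, (∑ q ∈ η.image Φ, if Φ p = q then 0 else -Real.log |Φ p - q|)
        = ∑ q ∈ η, if Φ p = Φ q then 0 else -Real.log |Φ p - Φ q| := fun p hp =>
      Finset.sum_image hinj'
    rw [Finset.sum_congr rfl step1]
    have step2 : ∀ p ∈ η, ∀ q ∈ η, (if Φ p = Φ q then 0 else -Real.log |Φ p - Φ q|)
        = (if p = q then 0 else -Real.log |p - q|) + slopeLog Φ p q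
          + (if p = q then Real.log (deriv Φ p) else 0) := by
      intro p hp q hq
      by_cases h : p = q
      · subst h
        simp only [if_pos rfl, ite_true, if_true, eq_self_iff_true, hdiag]
        ring
      · have hΦne : Φ p ≠ Φ q := fun hh => h (hinj' p hp q hq hh)
        rw [if_neg hΦne, if_neg h, if_neg h, add_zero]
        exact hsplit p (hsub (Finset.mem_coe.mpr hp)) q (hsub (Finset.mem_coe.mpr hq)) h
    calc (∑ p ∈ η, ∑ q ∈ η, if Φ p = Φ q then 0 else -Real.log |Φ p - Φ q|)
        = ∑ p ∈ η, ∑ q ∈ η, ((if p = q then 0 else -Real.log |p - q|) + slopeLog Φ p q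
            + (if p = q then Real.log (deriv Φ p) else 0)) :=
          Finset.sum_congr rfl fun p hp => Finset.sum_congr rfl fun q hq => step2 p hp q hq
      _ = _ := by
          simp only [Finset.sum_add_distrib]
          congr 1
          refine Finset.sum_congr rfl fun p hp => ?_
          rw [Finset.sum_ite_eq η p (fun _ => Real.log (deriv Φ p)), if_pos hp]
  -- atom-background sums
  have hBsum : (∑ p ∈ η.image Φ, ∫ y in (-lam)..lam, (-Real.log |p - y|) * μ y)
      = (∑ p ∈ η, ∫ y in (-lam)..lam, -Real.log |p - y|)
        + ∑ p ∈ η, ∫ y in (-lam)..lam, slopeLog Φ p y := by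
    rw [Finset.sum_image hinj', ← Finset.sum_add_distrib]
    refine Finset.sum_congr rfl fun p hp => ?_
    rw [intervalInt_eq_Icc hlam, intervalInt_eq_Icc hlam, intervalInt_eq_Icc hlam]
    exact hBp p (hsub (Finset.mem_coe.mpr hp))
  -- background-background term
  set F : ℝ → ℝ := fun x => ∫ y, (-Real.log |x - y|) * μ y ∂ν0 with hFdef
  obtain ⟨μ', hμ'sm, hμ'eq⟩ : ∃ μ' : ℝ → ℝ, StronglyMeasurable μ' ∧ μ =ᵐ[ν0] μ' :=
    ⟨hμsm.mk μ, hμsm.stronglyMeasurable_mk, hμsm.ae_eq_mk⟩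
  have hFmeas : StronglyMeasurable F := by
    have h1 : StronglyMeasurable (fun z : ℝ × ℝ => (-Real.log |z.1 - z.2|) * μ' z.2) := by
      apply StronglyMeasurable.mul
      · exact ((Real.measurable_log.comp
          ((continuous_fst.sub continuous_snd).abs.measurable)).neg).stronglyMeasurable
      · exact hμ'sm.comp_measurable measurable_snd
    have h2 := h1.integral_prod_right' (ν := ν0)
    have h3 : F = fun x => ∫ y, (-Real.log |x - y|) * μ' y ∂ν0 := by
      funext x
      exact integral_congr_ae (by filter_upwards [hμ'eq] with y hy; rw [hy])
    rw [h3]; exact h2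
  have hprod : Integrable (fun z : ℝ × ℝ => Real.log |z.1 - z.2|) (ν0.prod ν0) := by
    rw [hν0def, Measure.prod_restrict, ← Measure.volume_eq_prod]
    exact hlog
  have hG_int : Integrable (fun x => ∫ y, -Real.log |x - y| ∂ν0) ν0 := by
    have h4 := hprod.neg.integral_prod_left
    simpa using h4
  have hW_int : Integrable (fun x => ∫ y, ‖Real.log |x - y|‖ ∂ν0) ν0 :=
    hprod.integral_norm_prod_left
  have hiInner : ∀ x : ℝ, Integrable (fun y => (-Real.log |x - y|) * μ y) ν0 := by
    intro x
    exact ((iLogNeg x).bdd_mul hμsm hμbd).congr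
      (Filter.Eventually.of_forall fun y => mul_comm _ _)
  have hF_int : Integrable F ν0 := by
    refine Integrable.mono' (hW_int.const_mul M) hFmeas.aestronglyMeasurable ?_
    refine Filter.Eventually.of_forall fun x => ?_
    calc ‖F x‖ ≤ ∫ y, ‖(-Real.log |x - y|) * μ y‖ ∂ν0 := norm_integral_le_integral_norm _
      _ ≤ ∫ y, M * ‖Real.log |x - y|‖ ∂ν0 := by
          refine integral_mono_ae (hiInner x).norm (((iLog x).norm.const_mul M)) ?_
          filter_upwards [hμbd] with y hy
          rw [norm_mul, norm_neg]
          calc ‖Real.log |x - y|‖ * ‖μ y‖ ≤ ‖Real.log |x - y|‖ * M :=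
                mul_le_mul_of_nonneg_left hy (norm_nonneg _)
            _ = M * ‖Real.log |x - y|‖ := mul_comm _ _
      _ = M * ∫ y, ‖Real.log |x - y|‖ ∂ν0 := MeasureTheory.integral_const_mul M _
  have hFμ_int : Integrable (fun x => F x * μ x) ν0 :=
    (hF_int.bdd_mul hμsm hμbd).congr (Filter.Eventually.of_forall fun x => mul_comm _ _)
  have hFΦ_int : Integrable (fun s => F (Φ s)) ν0 :=
    keyint F hFmeas.aestronglyMeasurable hFμ_int
  have hFsplit : ∀ᵐ s ∂ν0, F (Φ s)
      = (∫ t, -Real.log |s - t| ∂ν0) + ∫ t, slopeLog Φ s t ∂ν0 := by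
    filter_upwards [ae_restrict_mem hIm] with s hs
    have h6 : F (Φ s) = ∫ t, -Real.log |Φ s - Φ t| ∂ν0 := innerEq (Φ s)
    rw [h6]
    exact innerSplit s hs
  have hCν : (∫ x, F x * μ x ∂ν0)
      = (∫ x, (∫ y, -Real.log |x - y| ∂ν0) ∂ν0) + ∫ x, (∫ y, slopeLog Φ x y ∂ν0) ∂ν0 := by
    have h0 : (∫ x, F x * μ x ∂ν0) = ∫ s, F (Φ s) ∂ν0 :=
      (key F hFmeas.aestronglyMeasurable).symm
    have iH : Integrable (fun s => ∫ t, slopeLog Φ s t ∂ν0) ν0 := by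
      refine (hFΦ_int.sub hG_int).congr ?_
      filter_upwards [hFsplit] with s h
      simp only [Pi.sub_apply]
      linarith [h]
    rw [h0, integral_congr_ae hFsplit, integral_add hG_int iH]
  -- conversions of the double integrals
  have hC1' : (∫ x in (-lam)..lam, ∫ y in (-lam)..lam, (-Real.log |x - y|) * (μ x * μ y))
      = ∫ x, F x * μ x ∂ν0 := by
    rw [intervalInt_eq_Icc hlam]
    refine integral_congr_ae (Filter.Eventually.of_forall fun x => ?_)
    beta_reduce
    rw [intervalInt_eq_Icc hlam]
    rw [show (fun y => (-Real.log |x - y|) * (μ x * μ y))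
        = fun y => μ x * ((-Real.log |x - y|) * μ y) from funext fun y => by ring]
    rw [MeasureTheory.integral_const_mul]
    exact mul_comm _ _
  have hGint : (∫ x in (-lam)..lam, ∫ y in (-lam)..lam, -Real.log |x - y|)
      = ∫ x, (∫ y, -Real.log |x - y| ∂ν0) ∂ν0 := by
    rw [intervalInt_eq_Icc hlam]
    refine integral_congr_ae (Filter.Eventually.of_forall fun x => ?_)
    beta_reduce
    rw [intervalInt_eq_Icc hlam]
  have hH1 : (∫ x in (-lam)..lam, ∫ y in (-lam)..lam, slopeLog Φ x y)
      = ∫ x, (∫ y, slopeLog Φ x y ∂ν0) ∂ν0 := by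
    rw [intervalInt_eq_Icc hlam]
    refine integral_congr_ae (Filter.Eventually.of_forall fun x => ?_)
    beta_reduce
    rw [intervalInt_eq_Icc hlam]
  have hCfull : (∫ x in (-lam)..lam, ∫ y in (-lam)..lam, -Real.log |x - y| * (μ x * μ y))
      = (∫ x in (-lam)..lam, ∫ y in (-lam)..lam, -Real.log |x - y|)
        + (∫ x in (-lam)..lam, ∫ y in (-lam)..lam, slopeLog Φ x y) := by
    rw [hC1', hCν, hGint, hH1]
  have toInterval : ∀ g : ℝ → ℝ, Integrable g ν0 → IntervalIntegrable g volume (-lam) lam := by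
    intro g hg
    rw [intervalIntegrable_iff_integrableOn_Ioc_of_le hle]
    exact MeasureTheory.IntegrableOn.mono_set hg Set.Ioc_subset_Icc_self
  have e1 : (∑ p ∈ η.image Φ, ∫ y in (-lam)..lam, (-Real.log |p - y| * μ y
        + ∫ x in (-lam)..lam, ∫ y in (-lam)..lam, -Real.log |x - y| * (μ x * μ y)))
      = (∑ p ∈ η.image Φ, ∫ y in (-lam)..lam, -Real.log |p - y| * μ y)
        + ((η.image Φ).card : ℝ) * (2 * lam *
            (∫ x in (-lam)..lam, ∫ y in (-lam)..lam, -Real.log |x - y| * (μ x * μ y))) := by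
    have h7 : ∀ p ∈ η.image Φ, (∫ y in (-lam)..lam, (-Real.log |p - y| * μ y
          + ∫ x in (-lam)..lam, ∫ y in (-lam)..lam, -Real.log |x - y| * (μ x * μ y)))
        = (∫ y in (-lam)..lam, -Real.log |p - y| * μ y)
          + 2 * lam * (∫ x in (-lam)..lam, ∫ y in (-lam)..lam,
              -Real.log |x - y| * (μ x * μ y)) := by
      intro p hp
      rw [intervalIntegral.integral_add (toInterval _ (hiInner p)) intervalIntegrable_const,
        intervalIntegral.integral_const, smul_eq_mul, show lam - -lam = 2 * lam by ring,
        mul_assoc]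
    rw [Finset.sum_congr rfl h7, Finset.sum_add_distrib, Finset.sum_const, nsmul_eq_mul]
  have e2 : (∑ p ∈ η, ∫ y in (-lam)..lam, (-Real.log |p - y|
        + ∫ x in (-lam)..lam, ∫ y in (-lam)..lam, -Real.log |x - y|))
      = (∑ p ∈ η, ∫ y in (-lam)..lam, -Real.log |p - y|)
        + (η.card : ℝ) * (2 * lam *
            (∫ x in (-lam)..lam, ∫ y in (-lam)..lam, -Real.log |x - y|)) := by
    have h7 : ∀ p ∈ η, (∫ y in (-lam)..lam, (-Real.log |p - y|
          + ∫ x in (-lam)..lam, ∫ y in (-lam)..lam, -Real.log |x - y|))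
        = (∫ y in (-lam)..lam, -Real.log |p - y|)
          + 2 * lam * (∫ x in (-lam)..lam, ∫ y in (-lam)..lam, -Real.log |x - y|) := by
      intro p hp
      rw [intervalIntegral.integral_add (toInterval _ (iLogNeg p)) intervalIntegrable_const,
        intervalIntegral.integral_const, smul_eq_mul, show lam - -lam = 2 * lam by ring,
        mul_assoc]
    rw [Finset.sum_congr rfl h7, Finset.sum_add_distrib, Finset.sum_const, nsmul_eq_mul]
  have e3 : (∑ p ∈ η, ∫ y in (-lam)..lam, (slopeLog Φ p y
        + ∫ x in (-lam)..lam, ∫ y in (-lam)..lam, slopeLog Φ x y))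
      = (∑ p ∈ η, ∫ y in (-lam)..lam, slopeLog Φ p y)
        + (η.card : ℝ) * (2 * lam *
            (∫ x in (-lam)..lam, ∫ y in (-lam)..lam, slopeLog Φ x y)) := by
    have h7 : ∀ p ∈ η, (∫ y in (-lam)..lam, (slopeLog Φ p y
          + ∫ x in (-lam)..lam, ∫ y in (-lam)..lam, slopeLog Φ x y))
        = (∫ y in (-lam)..lam, slopeLog Φ p y)
          + 2 * lam * (∫ x in (-lam)..lam, ∫ y in (-lam)..lam, slopeLog Φ x y) := by
      intro p hp
      rw [intervalIntegral.integral_add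
          (toInterval _ (iSlope p (hsub (Finset.mem_coe.mpr hp)))) intervalIntegrable_const,
        intervalIntegral.integral_const, smul_eq_mul, show lam - -lam = 2 * lam by ring,
        mul_assoc]
    rw [Finset.sum_congr rfl h7, Finset.sum_add_distrib, Finset.sum_const, nsmul_eq_mul]
  have hcard : ((η.image Φ).card : ℝ) = (η.card : ℝ) := by
    rw [Finset.card_image_of_injOn fun a ha b hb h =>
      hΦinj (hsub (Finset.mem_coe.mpr ha)) (hsub (Finset.mem_coe.mpr hb)) h]
  -- final assembly
  simp only [pairEnergy, crossTerm, mul_one, one_mul]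
  rw [e1, e2, e3, hA, hBsum, hCfull, hcard]
  ring
end
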